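/- arXiv:1801.02359 — 2 statements merged into one kernel-verified Lean document; each statement's English description precedes it below -/
import Mathlib

section
/- For every natural number n ≥ 1 and real s, ∫_ℝ e^{sx} ∑_{k=0}^{n−1} φ_k(x)² dx = n · e^{s²/4} · ₁F₁(1−n; 2; −s²/2). -/
open Real MeasureTheory

/-- Physicists' Hermite polynomial `H n x = (-1)^n e^{x^2} (d/dx)^n e^{-x^2}`. -/
noncomputable def physHermite (n : ℕ) (x : ℝ) : ℝ :=
  (-1)^n * Real.exp (x^2) * iteratedDeriv n (fun y => Real.exp (-y^2)) x

/-- Hermite function `φ k x = (2^k k! √π)^{-1/2} H_k(x) e^{-x²/2}`. -/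
noncomputable def hermiteFn (k : ℕ) (x : ℝ) : ℝ :=
  (Real.sqrt (2^k * k.factorial * Real.sqrt Real.pi))⁻¹ * physHermite k x * Real.exp (-x^2/2)

/-- Confluent hypergeometric function `₁F₁(-k; b; x)` with nonpositive integer first
parameter `-k`; it is the polynomial `∑_{j=0}^{k} ((-k)_j/(b)_j) x^j/j!`, where the rising
factorial `(-k)_j = (-1)^j k!/(k-j)!`. -/
noncomputable def oneF1neg (k : ℕ) (b x : ℝ) : ℝ :=
  ∑ j ∈ Finset.range (k+1),
    ((-1)^j * (k.descFactorial j : ℝ) / ∏ i ∈ Finset.range j, (b + i)) * x^j / (j.factorial : ℝ)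

/-- GUE mean density at σ² = 1/2: partial sum of squared Hermite functions. -/
noncomputable def pGUE (n : ℕ) (x : ℝ) : ℝ := ∑ k ∈ Finset.range n, hermiteFn k x ^ 2

/-- GUE mean density with general variance σ². -/
noncomputable def pGUEvar (n : ℕ) (σ x : ℝ) : ℝ :=
  (σ * Real.sqrt 2)⁻¹ * pGUE n (x / (σ * Real.sqrt 2))

/-- The function τₙ from the GSE/GOE densities. -/
noncomputable def tauFn (n : ℕ) (x : ℝ) : ℝ :=
  Real.sqrt (n/2) * hermiteFn (n-1) x *
    ((1/2) * ∫ t : ℝ, Real.sign (x - t) * hermiteFn n t)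

/-- The function αₙ (for odd n) from the GOE density. -/
noncomputable def alphaFn (n : ℕ) (x : ℝ) : ℝ :=
  hermiteFn (n-1) x / ∫ t : ℝ, hermiteFn (n-1) t

namespace GueMgf

open Polynomial Filter Topology

noncomputable def w (t x : ℝ) : ℝ := Real.exp (t * x - x ^ 2 / 2)

lemma w_pos (t x : ℝ) : 0 < w t x := Real.exp_pos _

lemma w_eq (t x : ℝ) :
    w t x = Real.exp (t ^ 2 / 2) * Real.exp (-(1/2 : ℝ) * (x - t) ^ 2) := by
  rw [w, ← Real.exp_add]; ring_nf

lemma integrable_pow_gauss (n : ℕ) :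
    Integrable (fun y : ℝ => y ^ n * Real.exp (-(1/2 : ℝ) * y ^ 2)) := by
  have h2 : Integrable (fun y : ℝ => y ^ (2 * n) * Real.exp (-(1/2 : ℝ) * y ^ 2)) := by
    have h := integrable_rpow_mul_exp_neg_mul_sq (show (0:ℝ) < 1/2 by norm_num)
      (s := ((2 * n : ℕ) : ℝ)) (lt_of_lt_of_le (by norm_num) (Nat.cast_nonneg _))
    refine h.congr (Filter.Eventually.of_forall fun y => ?_)
    simp only [Real.rpow_natCast]
  have hexp : Integrable (fun y : ℝ => Real.exp (-(1/2 : ℝ) * y ^ 2)) :=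
    integrable_exp_neg_mul_sq (by norm_num)
  refine (hexp.add h2).mono' ?_ ?_
  · exact ((continuous_pow n).mul (by fun_prop)).aestronglyMeasurable
  · refine Filter.Eventually.of_forall fun y => ?_
    have he : (0:ℝ) < Real.exp (-(1/2 : ℝ) * y ^ 2) := Real.exp_pos _
    have hsq : (0:ℝ) ≤ y ^ (2 * n) := (even_two_mul n).pow_nonneg y
    have h1 : |y| ^ n ≤ 1 + y ^ (2 * n) := by
      rcases le_total (|y|) 1 with h | h
      · have := pow_le_one₀ (abs_nonneg y) h (n := n)
        linarith
      · have h' : |y| ^ n ≤ |y| ^ (2 * n) := pow_le_pow_right₀ h (by omega)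
        have h2n : |y| ^ (2 * n) = y ^ (2 * n) := by
          rw [← abs_pow, abs_of_nonneg hsq]
        linarith [h2n ▸ h']
    calc ‖y ^ n * Real.exp (-(1/2 : ℝ) * y ^ 2)‖
        = |y| ^ n * Real.exp (-(1/2 : ℝ) * y ^ 2) := by
          rw [norm_mul, norm_pow, Real.norm_eq_abs, Real.norm_eq_abs, abs_of_pos he]
      _ ≤ (1 + y ^ (2 * n)) * Real.exp (-(1/2 : ℝ) * y ^ 2) :=
          mul_le_mul_of_nonneg_right h1 he.le
      _ = Real.exp (-(1/2 : ℝ) * y ^ 2) + y ^ (2*n) * Real.exp (-(1/2 : ℝ) * y ^ 2) := by ring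

lemma integrable_poly_gauss0 (q : ℝ[X]) :
    Integrable (fun y : ℝ => q.eval y * Real.exp (-(1/2 : ℝ) * y ^ 2)) := by
  induction q using Polynomial.induction_on' with
  | monomial n c =>
      simp only [eval_monomial]
      simpa [mul_assoc] using (integrable_pow_gauss n).const_mul c
  | add p q hp hq => simpa [add_mul] using (hp.add hq : Integrable (fun y : ℝ => p.eval y * Real.exp (-(1/2 : ℝ) * y ^ 2) + q.eval y * Real.exp (-(1/2 : ℝ) * y ^ 2)))

lemma integrable_poly_w (p : ℝ[X]) (t : ℝ) :
    Integrable (fun x : ℝ => p.eval x * w t x) := by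
  have h0 : Integrable (fun y : ℝ =>
      (p.comp (X + C t)).eval y * Real.exp (-(1/2:ℝ) * y ^ 2)) :=
    integrable_poly_gauss0 _
  have h1 := (h0.comp_sub_right t).const_mul (Real.exp (t ^ 2 / 2))
  refine h1.congr (Filter.Eventually.of_forall fun x => ?_)
  simp only [eval_comp, eval_add, eval_X, eval_C, sub_add_cancel, w_eq]
  ring

lemma tendsto_poly_w_atTop (p : ℝ[X]) (t : ℝ) :
    Tendsto (fun x => p.eval x * w t x) atTop (𝓝 0) := by
  have h : Tendsto (fun x => |p.eval x / Real.exp x|) atTop (𝓝 0) := by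
    simpa using (p.tendsto_div_exp_atTop).abs
  apply squeeze_zero_norm' ?_ h
  filter_upwards [eventually_ge_atTop (2 * (t + 1)), eventually_ge_atTop 0] with x hx hx0
  have hexp : w t x ≤ Real.exp (-x) := by
    apply Real.exp_le_exp.2
    nlinarith
  have : ‖p.eval x * w t x‖ = |p.eval x| * w t x := by
    rw [norm_mul, Real.norm_eq_abs, Real.norm_eq_abs, abs_of_pos (w_pos t x)]
  rw [this, abs_div, abs_of_pos (Real.exp_pos x), div_eq_mul_inv, ← Real.exp_neg]
  exact mul_le_mul_of_nonneg_left hexp (abs_nonneg _)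

lemma tendsto_poly_w_atBot (p : ℝ[X]) (t : ℝ) :
    Tendsto (fun x => p.eval x * w t x) atBot (𝓝 0) := by
  have h := (tendsto_poly_w_atTop (p.comp (-X)) (-t)).comp tendsto_neg_atBot_atTop
  refine h.congr fun x => ?_
  simp only [Function.comp, eval_comp, eval_neg, eval_X, neg_neg, w]
  ring_nf

lemma hasDerivAt_poly_w (p : ℝ[X]) (t x : ℝ) :
    HasDerivAt (fun x => p.eval x * w t x)
      ((derivative p + (C t - X) * p).eval x * w t x) x := by
  have h1 : HasDerivAt (fun x => p.eval x) ((derivative p).eval x) x := p.hasDerivAt x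
  have h2 : HasDerivAt (fun x : ℝ => t * x - x ^ 2 / 2) (t - x) x := by
    have := ((hasDerivAt_id x).const_mul t).sub ((hasDerivAt_pow 2 x).div_const 2)
    exact this.congr_deriv (by ring)
  have h3 : HasDerivAt (fun x => w t x) ((t - x) * w t x) x := by
    simpa [w, mul_comm] using h2.exp
  have := h1.mul h3
  refine this.congr_deriv ?_
  simp only [eval_add, eval_mul, eval_sub, eval_C, eval_X]
  ring

lemma integral_d_eq_zero (p : ℝ[X]) (t : ℝ) :
    ∫ x : ℝ, (derivative p + (C t - X) * p).eval x * w t x = 0 := by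
  set q := derivative p + (C t - X) * p with hq
  have hint : Integrable (fun x => q.eval x * w t x) := integrable_poly_w q t
  have hIic : ∫ x in Set.Iic (0:ℝ), q.eval x * w t x = p.eval 0 * w t 0 - 0 :=
    integral_Iic_of_hasDerivAt_of_tendsto' (fun x _ => hasDerivAt_poly_w p t x)
      hint.integrableOn (tendsto_poly_w_atBot p t)
  have hIoi : ∫ x in Set.Ioi (0:ℝ), q.eval x * w t x = 0 - p.eval 0 * w t 0 :=
    integral_Ioi_of_hasDerivAt_of_tendsto' (fun x _ => hasDerivAt_poly_w p t x)
      hint.integrableOn (tendsto_poly_w_atTop p t)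
  rw [← intervalIntegral.integral_Iic_add_Ioi (b := (0:ℝ)) hint.integrableOn hint.integrableOn, hIic, hIoi]
  ring

/-- real Hermite (probabilists') polynomial -/
noncomputable def Hp (n : ℕ) : ℝ[X] := (Polynomial.hermite n).map (Int.castRingHom ℝ)

lemma Hp_zero : Hp 0 = 1 := by simp [Hp, hermite_zero]

lemma Hp_succ (n : ℕ) : Hp (n+1) = X * Hp n - derivative (Hp n) := by
  simp [Hp, hermite_succ, Polynomial.map_sub, Polynomial.map_mul, derivative_map]

lemma derivative_Hp (n : ℕ) : derivative (Hp n) = C (n : ℝ) * Hp (n-1) := by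
  induction n using Nat.strong_induction_on with
  | _ n ih =>
    match n with
    | 0 => simp [Hp_zero]
    | 1 => simp [Hp_succ, Hp_zero]
    | (k+2) =>
      have ih1 := ih (k+1) (by omega)
      have ih0 := ih k (by omega)
      have hk : Hp (k+1) = X * Hp k - C (k : ℝ) * Hp (k-1) := by
        rw [Hp_succ, ih0]
      rw [show k+2-1 = k+1 from rfl] at *
      rw [show k+1-1 = k from rfl] at *
      rw [Hp_succ (k+1), derivative_sub, derivative_mul, derivative_X, ih1,
        derivative_mul, derivative_C, ih0]
      simp only [Nat.cast_add, Nat.cast_one, Nat.cast_ofNat, map_add, map_one, map_ofNat]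
      linear_combination (-(C ((k:ℝ)) + 1)) * hk

/-- the weighted integral of a polynomial -/
noncomputable def I (p : ℝ[X]) (t : ℝ) : ℝ := ∫ x : ℝ, p.eval x * w t x

lemma I_add (p q : ℝ[X]) (t : ℝ) : I (p + q) t = I p t + I q t := by
  rw [I, I, I, ← integral_add (integrable_poly_w p t) (integrable_poly_w q t)]
  simp [add_mul]

lemma I_sub (p q : ℝ[X]) (t : ℝ) : I (p - q) t = I p t - I q t := by
  rw [I, I, I, ← integral_sub (integrable_poly_w p t) (integrable_poly_w q t)]
  simp [sub_mul]

lemma I_smul (a : ℝ) (p : ℝ[X]) (t : ℝ) : I (C a * p) t = a * I p t := by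
  rw [I, I, ← integral_const_mul]
  simp [mul_assoc]

lemma step (q : ℝ[X]) (n : ℕ) (t : ℝ) :
    I (Hp (n+1) * q) t = I (Hp n * derivative q) t + t * I (Hp n * q) t := by
  have h0 : I (derivative (Hp n * q) + (C t - X) * (Hp n * q)) t = 0 :=
    integral_d_eq_zero (Hp n * q) t
  have hpoly : derivative (Hp n * q) + (C t - X) * (Hp n * q)
      = Hp n * derivative q + C t * (Hp n * q) - Hp (n+1) * q := by
    rw [derivative_mul, Hp_succ]; ring
  rw [hpoly, I_sub, I_add, I_smul] at h0
  linarith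

noncomputable def G (t : ℝ) : ℝ := Real.sqrt (2 * Real.pi) * Real.exp (t ^ 2 / 2)

lemma I_one (t : ℝ) : I 1 t = G t := by
  rw [I]
  simp only [eval_one, one_mul]
  have : ∀ x : ℝ, w t x = Real.exp (t ^ 2 / 2) * Real.exp (-(1/2 : ℝ) * (x - t) ^ 2) := by
    intro x; rw [w, ← Real.exp_add]; ring_nf
  simp_rw [this]
  rw [integral_const_mul]
  rw [integral_sub_right_eq_self (μ := volume) (fun x : ℝ => Real.exp (-(1/2 : ℝ) * x ^ 2)) t]
  rw [integral_gaussian, G]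
  rw [show Real.pi / (1/2 : ℝ) = 2 * Real.pi by ring]
  ring

lemma I_Hp (n : ℕ) (t : ℝ) : I (Hp n) t = t ^ n * G t := by
  induction n with
  | zero => simpa [Hp_zero] using I_one t
  | succ m ih =>
    have h := step 1 m t
    rw [mul_one, mul_one, derivative_one, mul_zero] at h
    have h0 : I (0 : ℝ[X]) t = 0 := by
      simpa using I_smul 0 0 t
    rw [h, h0, ih]
    ring

noncomputable def S (m n : ℕ) (t : ℝ) : ℝ :=
  ∑ j ∈ Finset.range (m+1),
    (m.choose j * n.choose j * j.factorial : ℝ) * (t ^ (m - j) * t ^ (n - j))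

lemma S_zero_right (m : ℕ) (t : ℝ) : S m 0 t = t ^ m := by
  rw [S, Finset.sum_eq_single 0]
  · simp
  · intro j hj hj0
    rcases Nat.exists_eq_succ_of_ne_zero hj0 with ⟨i, rfl⟩
    simp [Nat.choose_zero_succ]
  · intro h; exact absurd (Finset.mem_range.2 (Nat.succ_pos m)) h

lemma S_zero_left (n : ℕ) (t : ℝ) : S 0 n t = t ^ n := by
  rw [S]; simp

lemma Scomb (m n : ℕ) (t : ℝ) :
    S m (n+1) t = m * S (m-1) n t + t * S m n t := by
  cases m with
  | zero =>
    simp only [S_zero_left, Nat.cast_zero, zero_mul, zero_add, pow_succ]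
    ring
  | succ M =>
    rw [show (M+1) - 1 = M from rfl]
    rw [S, S, S, Finset.sum_range_succ']
    conv_rhs => enter [2, 2]; rw [Finset.sum_range_succ']
    have key : ∀ i ∈ Finset.range (M+1),
        ((M+1).choose (i+1) * (n+1).choose (i+1) * (i+1).factorial : ℝ) *
            (t ^ (M+1 - (i+1)) * t ^ (n+1 - (i+1)))
          = ((M:ℝ)+1) * ((M.choose i * n.choose i * i.factorial : ℝ) *
              (t ^ (M - i) * t ^ (n - i)))
            + t * (((M+1).choose (i+1) * n.choose (i+1) * (i+1).factorial : ℝ) *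
              (t ^ (M+1 - (i+1)) * t ^ (n - (i+1)))) := by
      intro i hi
      have hbN : (M+1) * M.choose i * i.factorial
          = (M+1).choose (i+1) * (i+1).factorial := by
        rw [Nat.factorial_succ, ← mul_assoc, ← Nat.add_one_mul_choose_eq]
      have hbR : ((M:ℝ)+1) * (M.choose i) * (i.factorial)
          = ((M+1).choose (i+1)) * ((i+1).factorial) := by exact_mod_cast hbN
      have hexp1 : M + 1 - (i+1) = M - i := by omega
      rw [hexp1, Nat.choose_succ_succ (n) (i)]
      push_cast
      by_cases hin : i < n
      · have hexp2 : t * t ^ (n - (i+1)) = t ^ (n - i) := by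
          rw [← pow_succ']; congr 1; omega
        linear_combination (-((n.choose i : ℝ) * (t ^ (M - i) * t ^ (n - i)))) * hbR
          + (-(((M+1).choose (i+1) : ℝ) * ((n.choose (i+1) : ℝ)) * ((i+1).factorial : ℝ) * t ^ (M-i))) * hexp2
      · have h0 : n.choose (i+1) = 0 := Nat.choose_eq_zero_of_lt (by omega)
        rw [h0]
        push_cast
        linear_combination (-((n.choose i : ℝ) * (t ^ (M - i) * t ^ (n - i)))) * hbR
    rw [Finset.sum_congr rfl key, Finset.sum_add_distrib, ← Finset.mul_sum, ← Finset.mul_sum]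
    simp only [Nat.choose_zero_right, Nat.factorial_zero, Nat.cast_one, one_mul,
      Nat.sub_zero, Nat.cast_mul]
    push_cast
    ring

lemma key_rec (m n : ℕ) (t : ℝ) :
    I (Hp m * Hp (n+1)) t = m * I (Hp (m-1) * Hp n) t + t * I (Hp m * Hp n) t := by
  have h := step (Hp m) n t
  rw [derivative_Hp m] at h
  have e2 : Hp n * (C (m:ℝ) * Hp (m-1)) = C (m:ℝ) * (Hp (m-1) * Hp n) := by ring
  rw [mul_comm (Hp (n+1)) (Hp m), e2, I_smul, mul_comm (Hp n) (Hp m)] at h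
  exact h

lemma Anm (n m : ℕ) (t : ℝ) : I (Hp m * Hp n) t = G t * S m n t := by
  induction n generalizing m with
  | zero => rw [Hp_zero, mul_one, I_Hp, S_zero_right]; ring
  | succ k ih =>
    rw [key_rec, ih, ih, Scomb]; ring

lemma sqrt2_pos : (0:ℝ) < Real.sqrt 2 := Real.sqrt_pos.2 (by norm_num)

lemma physHermite_eq (n : ℕ) (x : ℝ) :
    physHermite n x = Real.sqrt 2 ^ n * (Hp n).eval (Real.sqrt 2 * x) := by
  have hcd : ContDiff ℝ n (fun u : ℝ => Real.exp (-(u^2/2))) := by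
    have h1 : ContDiff ℝ n (fun u : ℝ => -(u^2/2)) :=
      (((contDiff_id (𝕜 := ℝ) (E := ℝ)).pow 2).div_const 2).neg
    exact Real.contDiff_exp.comp h1
  have hcomp : (fun y : ℝ => Real.exp (-y^2))
      = fun y => (fun u : ℝ => Real.exp (-(u^2/2))) (Real.sqrt 2 * y) := by
    funext y
    have h2 : (Real.sqrt 2 * y)^2 = 2 * y^2 := by
      rw [mul_pow, Real.sq_sqrt (by norm_num : (0:ℝ) ≤ 2)]
    simp only [h2]
    norm_num
  have hHp : ∀ y : ℝ, (Hp n).eval y = Polynomial.aeval y (Polynomial.hermite n) := by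
    intro y
    rw [Hp, Polynomial.eval_map, Polynomial.aeval_def, algebraMap_int_eq]
  rw [physHermite, hcomp, iteratedDeriv_comp_const_mul hcd]
  beta_reduce
  rw [iteratedDeriv_eq_iterate]
  rw [Polynomial.deriv_gaussian_eq_hermite_mul_gaussian]
  have h2 : (Real.sqrt 2 * x)^2 = 2 * x^2 := by
    rw [mul_pow, Real.sq_sqrt (by norm_num : (0:ℝ) ≤ 2)]
  rw [hHp, h2]
  have hexp : Real.exp (x^2) * Real.exp (-(2*x^2/2)) = 1 := by
    rw [← Real.exp_add]; norm_num
  have hsign : ((-1:ℝ))^n * ((-1:ℝ))^n = 1 := by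
    rw [← pow_add]; exact Even.neg_one_pow ⟨n, by ring⟩
  linear_combination (Real.sqrt 2 ^ n * ((Polynomial.aeval (Real.sqrt 2 * x)) (Polynomial.hermite n)) * ((-1:ℝ))^n * ((-1:ℝ))^n) * hexp
    + (Real.sqrt 2 ^ n * ((Polynomial.aeval (Real.sqrt 2 * x)) (Polynomial.hermite n))) * hsign

lemma hermite_sq (k : ℕ) (s x : ℝ) :
    Real.exp (s*x) * hermiteFn k x ^ 2
      = ((k.factorial : ℝ) * Real.sqrt Real.pi)⁻¹ *
        ((Hp k * Hp k).eval (Real.sqrt 2 * x) * w (s / Real.sqrt 2) (Real.sqrt 2 * x)) := by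
  have h2 : (Real.sqrt 2 * x)^2 = 2 * x^2 := by
    rw [mul_pow, Real.sq_sqrt (by norm_num : (0:ℝ) ≤ 2)]
  have hs2 : s / Real.sqrt 2 * (Real.sqrt 2 * x) = s * x := by
    have hne := sqrt2_pos.ne'
    field_simp
  have hw : w (s / Real.sqrt 2) (Real.sqrt 2 * x) = Real.exp (s*x) * Real.exp (-x^2/2) * Real.exp (-x^2/2) := by
    rw [w, hs2, h2, ← Real.exp_add, ← Real.exp_add]
    congr 1; ring
  have hc2 : ((Real.sqrt (2^k * k.factorial * Real.sqrt Real.pi))⁻¹)^2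
      = ((2:ℝ)^k * k.factorial * Real.sqrt Real.pi)⁻¹ := by
    rw [inv_pow, Real.sq_sqrt (by positivity)]
  have hsk : (Real.sqrt 2 ^ k)^2 = (2:ℝ)^k := by
    rw [← pow_mul, mul_comm k 2, pow_mul, Real.sq_sqrt (by norm_num : (0:ℝ) ≤ 2)]
  rw [hermiteFn, physHermite_eq, Polynomial.eval_mul, hw]
  have expand : ((Real.sqrt (2^k * k.factorial * Real.sqrt Real.pi))⁻¹ *
      (Real.sqrt 2 ^ k * (Hp k).eval (Real.sqrt 2 * x)) * Real.exp (-x^2/2)) ^ 2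
      = (((Real.sqrt (2^k * k.factorial * Real.sqrt Real.pi))⁻¹)^2 * (Real.sqrt 2 ^ k)^2) *
        (((Hp k).eval (Real.sqrt 2 * x) * (Hp k).eval (Real.sqrt 2 * x)) *
          (Real.exp (-x^2/2) * Real.exp (-x^2/2))) := by ring
  rw [expand, hc2, hsk]
  have hpi : Real.sqrt Real.pi ≠ 0 := by positivity
  have hfac : (k.factorial : ℝ) ≠ 0 := by positivity
  have hcoef : ((2:ℝ)^k * k.factorial * Real.sqrt Real.pi)⁻¹ * (2:ℝ)^k
      = ((k.factorial : ℝ) * Real.sqrt Real.pi)⁻¹ := by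
    field_simp
  rw [hcoef]
  ring

lemma Anm_int (n m : ℕ) (t : ℝ) :
    (∫ x : ℝ, (Hp m * Hp n).eval x * w t x) = G t * S m n t := Anm n m t

lemma integrable_term (k : ℕ) (s : ℝ) :
    Integrable (fun x : ℝ => Real.exp (s*x) * hermiteFn k x ^ 2) := by
  have h := ((integrable_poly_w (Hp k * Hp k) (s / Real.sqrt 2)).comp_mul_left'
    sqrt2_pos.ne').const_mul ((k.factorial : ℝ) * Real.sqrt Real.pi)⁻¹
  refine h.congr (Filter.Eventually.of_forall fun x => ?_)
  exact (hermite_sq k s x).symm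

lemma integral_term (k : ℕ) (s : ℝ) :
    ∫ x : ℝ, Real.exp (s*x) * hermiteFn k x ^ 2
      = Real.exp (s^2/4) * ((k.factorial : ℝ)⁻¹ * S k k (s / Real.sqrt 2)) := by
  simp_rw [hermite_sq]
  rw [MeasureTheory.integral_const_mul]
  have hcv : (∫ x : ℝ, (Hp k * Hp k).eval (Real.sqrt 2 * x) * w (s / Real.sqrt 2) (Real.sqrt 2 * x))
      = |(Real.sqrt 2)⁻¹| • ∫ u : ℝ, (Hp k * Hp k).eval u * w (s / Real.sqrt 2) u :=
    MeasureTheory.Measure.integral_comp_mul_left (fun u : ℝ => (Hp k * Hp k).eval u * w (s / Real.sqrt 2) u) (Real.sqrt 2)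
  rw [hcv, abs_of_pos (by positivity : (0:ℝ) < (Real.sqrt 2)⁻¹), smul_eq_mul,
    Anm_int k k (s / Real.sqrt 2), G]
  have h1 : Real.sqrt (2 * Real.pi) = Real.sqrt 2 * Real.sqrt Real.pi :=
    Real.sqrt_mul (by norm_num) _
  have h2 : (s / Real.sqrt 2)^2 / 2 = s^2 / 4 := by
    rw [div_pow, Real.sq_sqrt (by norm_num : (0:ℝ) ≤ 2)]
    ring
  rw [h1, h2]
  have hfac : (k.factorial:ℝ) ≠ 0 := by positivity
  have hpi : Real.sqrt Real.pi ≠ 0 := by positivity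
  have hs2 : Real.sqrt 2 ≠ 0 := sqrt2_pos.ne'
  field_simp

lemma S_diag (k : ℕ) (t : ℝ) :
    (k.factorial : ℝ)⁻¹ * S k k t
      = ∑ m ∈ Finset.range (k+1), (k.choose m : ℝ) * (t^2)^m / m.factorial := by
  rw [S, Finset.mul_sum,
    ← Finset.sum_range_reflect (fun m => (k.choose m : ℝ) * (t^2)^m / m.factorial) (k+1)]
  apply Finset.sum_congr rfl
  intro j hj
  have hjk : j ≤ k := by
    have := Finset.mem_range.1 hj; omega
  have hrefl : k + 1 - 1 - j = k - j := by omega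
  rw [hrefl, Nat.choose_symm hjk]
  have hpow : ((t:ℝ)^2)^(k-j) = t^(k-j) * t^(k-j) := by
    rw [pow_two, mul_pow]
  rw [hpow]
  have hR : (k.choose j : ℝ) * j.factorial * (k-j).factorial = k.factorial := by
    exact_mod_cast Nat.choose_mul_factorial_mul_factorial hjk
  have h1 : ((k-j).factorial : ℝ) ≠ 0 := by positivity
  have h2 : (k.factorial : ℝ) ≠ 0 := by positivity
  field_simp
  linear_combination ((k.choose j : ℝ) * (t^(k-j) * t^(k-j))) * hR

lemma outer_sum (N : ℕ) (z : ℝ) :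
    ∑ k ∈ Finset.range N, ∑ m ∈ Finset.range (k+1), (k.choose m : ℝ) * z^m / m.factorial
      = ∑ m ∈ Finset.range N, (N.choose (m+1) : ℝ) * z^m / m.factorial := by
  induction N with
  | zero => simp
  | succ M ih =>
    rw [Finset.sum_range_succ, ih]
    have hsplit : (∑ m ∈ Finset.range (M+1), ((M+1).choose (m+1) : ℝ) * z^m / m.factorial)
        = ∑ m ∈ Finset.range (M+1), ((M.choose m : ℝ) * z^m / m.factorial
            + (M.choose (m+1) : ℝ) * z^m / m.factorial) := by
      apply Finset.sum_congr rfl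
      intro m _
      have : ((M+1).choose (m+1) : ℝ) = M.choose m + M.choose (m+1) := by
        exact_mod_cast Nat.choose_succ_succ M m
      rw [this]; ring
    rw [hsplit, Finset.sum_add_distrib]
    have hlast : (∑ m ∈ Finset.range (M+1), (M.choose (m+1) : ℝ) * z^m / m.factorial)
        = ∑ m ∈ Finset.range M, (M.choose (m+1) : ℝ) * z^m / m.factorial := by
      rw [Finset.sum_range_succ, Nat.choose_succ_self]
      simp
    rw [hlast]
    ring

lemma prod_two_add (j : ℕ) :
    ∏ i ∈ Finset.range j, ((2:ℝ) + i) = ((j+1).factorial : ℝ) := by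
  induction j with
  | zero => simp
  | succ m ih =>
    rw [Finset.prod_range_succ, ih]
    have : (m+1+1).factorial = (m+1).factorial * (m+2) := by
      rw [Nat.factorial_succ]; ring
    rw [this]
    push_cast; ring

lemma rhs_eq (N : ℕ) (s : ℝ) :
    ((N+1 : ℕ) : ℝ) * oneF1neg N 2 (-s^2/2)
      = ∑ m ∈ Finset.range (N+1), ((N+1).choose (m+1) : ℝ) * (s^2/2)^m / m.factorial := by
  rw [oneF1neg, Finset.mul_sum]
  apply Finset.sum_congr rfl
  intro j _
  rw [prod_two_add]
  have hdr : ((N:ℝ)+1) * (N.descFactorial j : ℝ)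
      = ((j+1).factorial : ℝ) * ((N+1).choose (j+1) : ℝ) := by
    have h1 : (N+1) * N.descFactorial j = (N+1).descFactorial (j+1) :=
      (Nat.succ_descFactorial_succ N j).symm
    have h2 : (N+1).descFactorial (j+1) = (j+1).factorial * (N+1).choose (j+1) :=
      Nat.descFactorial_eq_factorial_mul_choose _ _
    exact_mod_cast h1.trans h2
  have hx : ((-1:ℝ))^j * (-s^2/2)^j = (s^2/2)^j := by
    have hm : (-1:ℝ) * (-s^2/2) = s^2/2 := by ring
    rw [← mul_pow, hm]
  have h1 : ((j+1).factorial : ℝ) ≠ 0 := by positivity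
  push_cast
  calc ((N:ℝ)+1) * ((-1)^j * (N.descFactorial j : ℝ) / ((j+1).factorial : ℝ) * (-s^2/2)^j / (j.factorial : ℝ))
      = (((N:ℝ)+1) * (N.descFactorial j : ℝ)) * ((-1:ℝ)^j * (-s^2/2)^j) / (((j+1).factorial : ℝ) * (j.factorial : ℝ)) := by
        ring
    _ = ((j+1).factorial : ℝ) * (((N+1).choose (j+1) : ℝ) * (s^2/2)^j) / (((j+1).factorial : ℝ) * (j.factorial : ℝ)) := by
        rw [hdr, hx]; ring
    _ = ((N+1).choose (j+1) : ℝ) * (s^2/2)^j / (j.factorial : ℝ) :=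
        mul_div_mul_left _ _ h1

end GueMgf

theorem gue_mgf_explicit (n : ℕ) (hn : 1 ≤ n) (s : ℝ) :
    ∫ x : ℝ, Real.exp (s*x) * ∑ k ∈ Finset.range n, hermiteFn k x ^ 2 =
      n * Real.exp (s^2/4) * oneF1neg (n-1) 2 (-s^2/2) := by
  obtain ⟨N, rfl⟩ : ∃ N, n = N + 1 := ⟨n - 1, by omega⟩
  rw [show N + 1 - 1 = N from rfl]
  have hswap : ∫ x : ℝ, Real.exp (s*x) * ∑ k ∈ Finset.range (N+1), hermiteFn k x ^ 2
      = ∑ k ∈ Finset.range (N+1), ∫ x : ℝ, Real.exp (s*x) * hermiteFn k x ^ 2 := by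
    rw [← MeasureTheory.integral_finset_sum _ (fun k _ => GueMgf.integrable_term k s)]
    congr 1; funext x; rw [Finset.mul_sum]
  rw [hswap]
  have hterm : ∀ k ∈ Finset.range (N+1),
      (∫ x : ℝ, Real.exp (s*x) * hermiteFn k x ^ 2)
        = Real.exp (s^2/4) * ∑ m ∈ Finset.range (k+1),
            (k.choose m : ℝ) * (s^2/2)^m / m.factorial := by
    intro k _
    rw [GueMgf.integral_term, GueMgf.S_diag]
    have : (s / Real.sqrt 2)^2 = s^2/2 := by
      rw [div_pow, Real.sq_sqrt (by norm_num : (0:ℝ) ≤ 2)]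
    rw [this]
  rw [Finset.sum_congr rfl hterm, ← Finset.mul_sum, GueMgf.outer_sum]
  rw [← GueMgf.rhs_eq]
  push_cast
  ring
end

section
/- For natural n ≥ 1 and real s ≠ 0, ∫_ℝ e^{sx} ∑_{k=0}^{n−1} φ_k(x)² dx = (√(2n)/s) ∫_ℝ e^{sx} φ_n(x) φ_{n−1}(x) dx. -/
open Real MeasureTheory

/-! ### Auxiliary material: Hermite polynomials as `Polynomial ℝ` -/

open Polynomial Filter

noncomputable def HP : ℕ → Polynomial ℝ
  | 0 => 1
  | (n+1) => Polynomial.C 2 * Polynomial.X * HP n - Polynomial.derivative (HP n)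

lemma HP_derivative : ∀ n : ℕ,
    Polynomial.derivative (HP (n+1)) = Polynomial.C (2*(n+1) : ℝ) * HP n
  | 0 => by
      simp [HP]
  | (n+1) => by
      rw [show HP (n+2) = Polynomial.C 2 * Polynomial.X * HP (n+1)
        - Polynomial.derivative (HP (n+1)) from rfl]
      rw [derivative_sub, derivative_mul, derivative_mul, HP_derivative n,
        show HP (n+1) = Polynomial.C 2 * Polynomial.X * HP n
          - Polynomial.derivative (HP n) from rfl]
      push_cast
      simp only [derivative_sub, derivative_mul, derivative_C, derivative_X,
        derivative_ofNat, derivative_one, map_add, map_mul, map_ofNat, C_add, C_mul, C_1]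
      ring

lemma hasDerivAt_exp_neg_sq (x : ℝ) :
    HasDerivAt (fun y : ℝ => Real.exp (-y^2)) (-2*x*Real.exp (-x^2)) x := by
  have h : HasDerivAt (fun y : ℝ => -y^2) (-(2*x)) x := by
    have := (hasDerivAt_pow 2 x).neg
    simp at this
    exact this
  have := (Real.hasDerivAt_exp (-x^2)).comp x h
  refine this.congr_deriv ?_
  symm
  ring

lemma iteratedDeriv_gauss (n : ℕ) :
    iteratedDeriv n (fun y => Real.exp (-y^2))
      = fun x => (-1)^n * (HP n).eval x * Real.exp (-x^2) := by
  induction n with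
  | zero => funext x; simp [HP]
  | succ n ih =>
    funext x
    rw [iteratedDeriv_succ, ih]
    have h : HasDerivAt (fun x : ℝ => (-1:ℝ)^n * (HP n).eval x * Real.exp (-x^2))
        ((-1)^(n+1) * (HP (n+1)).eval x * Real.exp (-x^2)) x := by
      have hp : HasDerivAt (fun x : ℝ => (HP n).eval x)
          ((Polynomial.derivative (HP n)).eval x) x := (HP n).hasDerivAt x
      have h2 := (hp.const_mul ((-1:ℝ)^n)).mul (hasDerivAt_exp_neg_sq x)
      refine h2.congr_deriv ?_
      symm
      rw [show HP (n+1) = Polynomial.C 2 * Polynomial.X * HP n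
        - Polynomial.derivative (HP n) from rfl]
      simp only [eval_sub, eval_mul, eval_C, eval_X, pow_succ]
      ring
    rw [h.deriv]

lemma physHermite_eq (n : ℕ) (x : ℝ) : physHermite n x = (HP n).eval x := by
  rw [physHermite, iteratedDeriv_gauss]
  have h1 : Real.exp (x^2) * Real.exp (-x^2) = 1 := by
    rw [← Real.exp_add]; simp
  have h2 : ((-1:ℝ)^n) * ((-1:ℝ)^n) = 1 := by
    rw [← pow_add]
    exact Even.neg_one_pow ⟨n, rfl⟩
  calc (-1:ℝ)^n * Real.exp (x^2) * ((-1)^n * (HP n).eval x * Real.exp (-x^2))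
      = (((-1:ℝ)^n) * ((-1:ℝ)^n)) * (Real.exp (x^2) * Real.exp (-x^2)) * (HP n).eval x := by
        ring
    _ = (HP n).eval x := by rw [h1, h2]; ring

noncomputable def cH (k : ℕ) : ℝ := (Real.sqrt (2^k * k.factorial * Real.sqrt Real.pi))⁻¹

lemma cH_pos (k : ℕ) : 0 < cH k := by
  rw [cH]
  have h : (0:ℝ) < 2^k * k.factorial * Real.sqrt Real.pi := by
    have := Real.sqrt_pos.mpr Real.pi_pos
    have h2 : (0:ℝ) < (k.factorial : ℝ) := by exact_mod_cast k.factorial_pos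
    positivity
  exact inv_pos.mpr (Real.sqrt_pos.mpr h)

lemma hermiteFn_eq (k : ℕ) (x : ℝ) :
    hermiteFn k x = cH k * (HP k).eval x * Real.exp (-x^2/2) := by
  rw [hermiteFn, physHermite_eq, cH]

lemma cH_succ (k : ℕ) : cH k = Real.sqrt (2*(k+1)) * cH (k+1) := by
  have hfac : (0:ℝ) < (k.factorial : ℝ) := by exact_mod_cast k.factorial_pos
  have hpi := Real.sqrt_pos.mpr Real.pi_pos
  have h : (2:ℝ)^(k+1) * ((k+1).factorial : ℝ) * Real.sqrt Real.pi
      = (2*((k:ℝ)+1)) * ((2:ℝ)^k * k.factorial * Real.sqrt Real.pi) := by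
    rw [Nat.factorial_succ]; push_cast; ring
  have hsplit : Real.sqrt ((2*((k:ℝ)+1)) * ((2:ℝ)^k * k.factorial * Real.sqrt Real.pi))
      = Real.sqrt (2*((k:ℝ)+1)) * Real.sqrt ((2:ℝ)^k * k.factorial * Real.sqrt Real.pi) :=
    Real.sqrt_mul (by positivity) _
  rw [cH, cH]
  rw [h, hsplit, mul_inv, ← mul_assoc,
    mul_inv_cancel₀ (ne_of_gt (Real.sqrt_pos.mpr (by positivity))), one_mul]

lemma sqrt_helper1 (k : ℕ) :
    Real.sqrt (((k:ℝ)+1)/2) * Real.sqrt (2*((k:ℝ)+1)) = (k:ℝ)+1 := by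
  rw [← Real.sqrt_mul (by positivity),
    show ((k:ℝ)+1)/2 * (2*((k:ℝ)+1)) = ((k:ℝ)+1)^2 by ring]
  exact Real.sqrt_sq (by positivity)

lemma sqrt_helper2 (a : ℝ) (ha : 0 ≤ a) : Real.sqrt (a/2) * 2 = Real.sqrt (2*a) := by
  rw [show (2:ℝ)*a = (a/2)*2^2 by ring, Real.sqrt_mul (by positivity) _,
    Real.sqrt_sq (by norm_num : (0:ℝ) ≤ 2)]

lemma hasDerivAt_exp_neg_sq_half (x : ℝ) :
    HasDerivAt (fun y : ℝ => Real.exp (-y^2/2)) (-x * Real.exp (-x^2/2)) x := by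
  have h : HasDerivAt (fun y : ℝ => -y^2/2) (-x) x := by
    have := ((hasDerivAt_pow 2 x).neg.div_const 2)
    refine this.congr_deriv ?_
    symm
    push_cast
    ring
  have := (Real.hasDerivAt_exp (-x^2/2)).comp x h
  refine this.congr_deriv ?_
  symm
  ring

lemma hasDerivAt_hermiteFn (k : ℕ) (x : ℝ) :
    HasDerivAt (hermiteFn k)
      (Real.sqrt (k/2) * hermiteFn (k-1) x - Real.sqrt ((k+1)/2) * hermiteFn (k+1) x) x := by
  have hfun : hermiteFn k = fun x => cH k * (HP k).eval x * Real.exp (-x^2/2) :=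
    funext (hermiteFn_eq k)
  have hp : HasDerivAt (fun x : ℝ => (HP k).eval x)
      ((Polynomial.derivative (HP k)).eval x) x := (HP k).hasDerivAt x
  have H := (hp.const_mul (cH k)).mul (hasDerivAt_exp_neg_sq_half x)
  rw [hfun]
  refine H.congr_deriv ?_
  symm
  rw [hermiteFn_eq, hermiteFn_eq]
  cases k with
  | zero =>
      have h1 : cH 0 = Real.sqrt 2 * cH 1 := by simpa using cH_succ 0
      have h5 : Real.sqrt ((1:ℝ)/2) * 2 = Real.sqrt 2 := by
        simpa using sqrt_helper2 1 (by norm_num)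
      simp only [show (0:ℕ)-1 = 0 from rfl, HP, derivative_one, map_one, eval_one,
        eval_zero, eval_sub, eval_mul, eval_C, eval_X, Nat.cast_zero, sub_zero]
      rw [show ((0:ℝ)+1)/2 = 1/2 by norm_num, show (0:ℝ)/2 = 0 by norm_num, Real.sqrt_zero,
        h1, ← h5]
      ring
  | succ m =>
      have e1 : Polynomial.eval x (Polynomial.derivative (HP (m+1)))
          = 2*((m:ℝ)+1) * Polynomial.eval x (HP m) := by
        rw [HP_derivative m]; simp only [eval_mul, eval_C]
      have e2 : Polynomial.eval x (HP (m+2))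
          = 2*x*Polynomial.eval x (HP (m+1)) - 2*((m:ℝ)+1)*Polynomial.eval x (HP m) := by
        rw [show HP (m+2) = Polynomial.C 2 * Polynomial.X * HP (m+1)
          - Polynomial.derivative (HP (m+1)) from rfl]
        simp only [eval_sub, eval_mul, eval_C, eval_X, e1]
      have s1 : Real.sqrt (((m:ℝ)+1)/2) * cH m = ((m:ℝ)+1) * cH (m+1) := by
        rw [cH_succ m]
        push_cast
        rw [← mul_assoc, sqrt_helper1]
      have s2 : Real.sqrt (((m:ℝ)+2)/2) * cH (m+2) = cH (m+1) / 2 := by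
        have h := cH_succ (m+1)
        rw [show m+1+1 = m+2 from rfl] at h
        push_cast at h
        rw [show (2:ℝ)*((m:ℝ)+1+1) = 2*((m:ℝ)+2) by ring] at h
        have h2 : Real.sqrt (((m:ℝ)+2)/2) * 2 = Real.sqrt (2*((m:ℝ)+2)) :=
          sqrt_helper2 _ (by positivity)
        rw [h, ← h2]
        ring
      simp only [Nat.add_sub_cancel, show m+1+1 = m+2 from rfl]
      push_cast
      rw [e1, show ((m:ℝ)+1+1) = (m:ℝ)+2 by ring, e2]
      linear_combination (Polynomial.eval x (HP m) * Real.exp (-x^2/2)) * s1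
        - ((2*x*Polynomial.eval x (HP (m+1)) - 2*((m:ℝ)+1)*Polynomial.eval x (HP m))
            * Real.exp (-x^2/2)) * s2

lemma hasDerivAt_sq_hermiteFn (k : ℕ) (x : ℝ) :
    HasDerivAt (fun x => hermiteFn k x ^ 2)
      (Real.sqrt (2*k) * (hermiteFn k x * hermiteFn (k-1) x)
        - Real.sqrt (2*(k+1)) * (hermiteFn (k+1) x * hermiteFn k x)) x := by
  have h := (hasDerivAt_hermiteFn k x).pow 2
  refine h.congr_deriv ?_
  symm
  rw [← sqrt_helper2 k (by positivity), ← sqrt_helper2 ((k:ℝ)+1) (by positivity)]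
  push_cast
  ring

lemma hasDerivAt_pGUEsum (n : ℕ) (x : ℝ) :
    HasDerivAt (fun x => ∑ k ∈ Finset.range n, hermiteFn k x ^ 2)
      (-(Real.sqrt (2*n) * (hermiteFn n x * hermiteFn (n-1) x))) x := by
  have h := HasDerivAt.fun_sum (fun k (_ : k ∈ Finset.range n) => hasDerivAt_sq_hermiteFn k x)
  refine h.congr_deriv ?_
  symm
  have this2 := Finset.sum_range_sub'
    (fun k => Real.sqrt (2*(k:ℝ)) * (hermiteFn k x * hermiteFn (k-1) x)) n
  simp only [Nat.add_sub_cancel, Nat.cast_add, Nat.cast_one, Nat.cast_zero, mul_zero,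
    Real.sqrt_zero, zero_mul, zero_sub] at this2
  exact this2.symm

lemma tendsto_quadratic_atBot (a b : ℝ) (hb : 0 < b) :
    Tendsto (fun x : ℝ => a*x - b*x^2) atTop atBot := by
  have h1 : Tendsto (fun x : ℝ => (x - a/(2*b))^2) atTop atTop :=
    (tendsto_pow_atTop two_ne_zero).comp (tendsto_atTop_add_const_right _ _ tendsto_id)
  have h2 : Tendsto (fun x : ℝ => b * (x - a/(2*b))^2) atTop atTop := h1.const_mul_atTop hb
  have h3 : Tendsto (fun x : ℝ => -(b * (x - a/(2*b))^2) + a^2/(4*b)) atTop atBot :=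
    tendsto_atBot_add_const_right _ _ (tendsto_neg_atTop_atBot.comp h2)
  apply h3.congr
  intro x
  field_simp
  ring

lemma tendsto_poly_exp_atTop (P : Polynomial ℝ) (a b : ℝ) (hb : 0 < b) :
    Tendsto (fun x => P.eval x * Real.exp (a*x - b*x^2)) atTop (nhds 0) := by
  have h1 := P.tendsto_div_exp_atTop
  have h2 : Tendsto (fun x : ℝ => Real.exp ((a+1)*x - b*x^2)) atTop (nhds 0) :=
    Real.tendsto_exp_atBot.comp (tendsto_quadratic_atBot (a+1) b hb)
  have h3 := h1.mul h2
  rw [mul_zero] at h3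
  apply h3.congr
  intro x
  rw [div_mul_eq_mul_div, mul_div_assoc, ← Real.exp_sub]
  congr 2
  ring

lemma tendsto_poly_exp_atBot (P : Polynomial ℝ) (a b : ℝ) (hb : 0 < b) :
    Tendsto (fun x => P.eval x * Real.exp (a*x - b*x^2)) atBot (nhds 0) := by
  have h := (tendsto_poly_exp_atTop (P.comp (-Polynomial.X)) (-a) b hb).comp
    tendsto_neg_atBot_atTop
  apply h.congr
  intro x
  simp only [Function.comp_apply, Polynomial.eval_comp, Polynomial.eval_neg,
    Polynomial.eval_X, neg_neg]
  congr 2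
  ring

lemma bounded_of_tendsto (f : ℝ → ℝ) (hc : Continuous f)
    (ht : Tendsto f atTop (nhds 0)) (hb : Tendsto f atBot (nhds 0)) :
    ∃ C, ∀ x, |f x| ≤ C := by
  have h1 : ∀ᶠ x in atTop, |f x| < 1 := by
    simpa [Real.dist_eq] using Metric.tendsto_nhds.mp ht 1 one_pos
  obtain ⟨a, ha⟩ := eventually_atTop.mp h1
  have h2 : ∀ᶠ x in atBot, |f x| < 1 := by
    simpa [Real.dist_eq] using Metric.tendsto_nhds.mp hb 1 one_pos
  obtain ⟨b, hb2⟩ := eventually_atBot.mp h2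
  obtain ⟨C, hC⟩ := (isCompact_Icc (a := b) (b := a)).exists_bound_of_continuousOn
    hc.continuousOn
  refine ⟨max C 1, fun x => ?_⟩
  rcases le_total x a with h | h
  · rcases le_total b x with h' | h'
    · exact le_max_of_le_left (by simpa [Real.norm_eq_abs] using hC x ⟨h', h⟩)
    · exact le_max_of_le_right (hb2 x h').le
  · exact le_max_of_le_right (ha x h).le

lemma integrable_poly_exp (P : Polynomial ℝ) (a b : ℝ) (hb : 0 < b) :
    Integrable (fun x => P.eval x * Real.exp (a*x - b*x^2)) := by
  have key : ∀ x : ℝ, P.eval x * Real.exp (a*x - b*x^2)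
      = (P.eval x * Real.exp (a*x - (b/2)*x^2)) * Real.exp (-(b/2) * x^2) := by
    intro x
    rw [mul_assoc, ← Real.exp_add]
    congr 2
    ring
  have hcont : Continuous (fun x : ℝ => P.eval x * Real.exp (a*x - (b/2)*x^2)) :=
    P.continuous.mul (Real.continuous_exp.comp (by continuity))
  obtain ⟨C, hC⟩ := bounded_of_tendsto _ hcont
    (tendsto_poly_exp_atTop P a (b/2) (by positivity))
    (tendsto_poly_exp_atBot P a (b/2) (by positivity))
  apply Integrable.mono'
    ((integrable_exp_neg_mul_sq (show (0:ℝ) < b/2 by positivity)).const_mul C)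
  · exact (P.continuous.mul (Real.continuous_exp.comp (by continuity))).aestronglyMeasurable
  · refine Filter.Eventually.of_forall fun x => ?_
    rw [Real.norm_eq_abs, key, abs_mul, abs_of_nonneg (Real.exp_pos _).le]
    exact mul_le_mul_of_nonneg_right (hC x) (Real.exp_pos _).le

lemma exp_mul_hermite_rep (s : ℝ) (j k : ℕ) (x : ℝ) :
    Real.exp (s*x) * hermiteFn j x * hermiteFn k x
      = (Polynomial.C (cH j * cH k) * (HP j * HP k)).eval x * Real.exp (s*x - 1*x^2) := by
  rw [hermiteFn_eq, hermiteFn_eq]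
  simp only [Polynomial.eval_mul, Polynomial.eval_C]
  rw [show Real.exp (s*x - 1*x^2)
      = Real.exp (s*x) * (Real.exp (-x^2/2) * Real.exp (-x^2/2)) from by
    rw [← Real.exp_add, ← Real.exp_add]; congr 1; ring]
  ring

lemma integrable_exp_herm (s : ℝ) (j k : ℕ) :
    Integrable (fun x => Real.exp (s*x) * hermiteFn j x * hermiteFn k x) :=
  (integrable_poly_exp (Polynomial.C (cH j * cH k) * (HP j * HP k)) s 1 one_pos).congr
    (Filter.Eventually.of_forall fun x => (exp_mul_hermite_rep s j k x).symm)

theorem gue_mgf_reduction (n : ℕ) (hn : 1 ≤ n) (s : ℝ) (hs : s ≠ 0) :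
    ∫ x : ℝ, Real.exp (s*x) * ∑ k ∈ Finset.range n, hermiteFn k x ^ 2 =
      (Real.sqrt (2*n) / s) * ∫ x : ℝ, Real.exp (s*x) * hermiteFn n x * hermiteFn (n-1) x := by
  set G1 : ℝ → ℝ := fun x => Real.exp (s*x) * ∑ k ∈ Finset.range n, hermiteFn k x ^ 2
    with hG1def
  set G2 : ℝ → ℝ := fun x => Real.exp (s*x) * hermiteFn n x * hermiteFn (n-1) x with hG2def
  have hG1i : Integrable G1 := by
    have hrw : G1 = fun x => ∑ k ∈ Finset.range n,
        Real.exp (s*x) * hermiteFn k x * hermiteFn k x := by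
      funext x
      show Real.exp (s*x) * ∑ k ∈ Finset.range n, hermiteFn k x ^ 2 = _
      rw [Finset.mul_sum]
      exact Finset.sum_congr rfl fun k _ => by ring
    rw [hrw]
    exact integrable_finset_sum _ (fun k _ => integrable_exp_herm s k k)
  have hG2i : Integrable G2 := integrable_exp_herm s n (n-1)
  have hderiv : ∀ x : ℝ, HasDerivAt G1 (s * G1 x - Real.sqrt (2*n) * G2 x) x := by
    intro x
    have he : HasDerivAt (fun x : ℝ => Real.exp (s*x)) (s * Real.exp (s*x)) x := by
      exact ((Real.hasDerivAt_exp (s*x)).comp x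
        ((hasDerivAt_id x).const_mul s)).congr_deriv (by simp [mul_comm])
    have h := he.mul (hasDerivAt_pGUEsum n x)
    refine h.congr_deriv ?_
    symm
    simp only [hG1def, hG2def]
    ring
  have hFint : Integrable (fun x => s * G1 x - Real.sqrt (2*n) * G2 x) :=
    (hG1i.const_mul s).sub (hG2i.const_mul _)
  have hrepF : G1 = fun x => (∑ k ∈ Finset.range n,
      Polynomial.C (cH k * cH k) * (HP k * HP k)).eval x * Real.exp (s*x - 1*x^2) := by
    funext x
    show Real.exp (s*x) * ∑ k ∈ Finset.range n, hermiteFn k x ^ 2 = _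
    rw [Polynomial.eval_finset_sum, Finset.sum_mul, Finset.mul_sum]
    exact Finset.sum_congr rfl fun k _ => by
      rw [← exp_mul_hermite_rep s k k x]; ring
  have htop : Tendsto G1 atTop (nhds 0) := by
    rw [hrepF]; exact tendsto_poly_exp_atTop _ s 1 one_pos
  have hbot : Tendsto G1 atBot (nhds 0) := by
    rw [hrepF]; exact tendsto_poly_exp_atBot _ s 1 one_pos
  have key1 : ∫ x in Set.Iic (0:ℝ), (s * G1 x - Real.sqrt (2*n) * G2 x) = G1 0 - 0 :=
    integral_Iic_of_hasDerivAt_of_tendsto' (fun x _ => hderiv x) hFint.integrableOn hbot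
  have key2 : ∫ x in Set.Ioi (0:ℝ), (s * G1 x - Real.sqrt (2*n) * G2 x) = 0 - G1 0 :=
    integral_Ioi_of_hasDerivAt_of_tendsto' (fun x _ => hderiv x) hFint.integrableOn htop
  have hzero : ∫ x : ℝ, (s * G1 x - Real.sqrt (2*n) * G2 x) = 0 := by
    rw [← intervalIntegral.integral_Iic_add_Ioi (b := (0:ℝ)) hFint.integrableOn
      hFint.integrableOn, key1, key2]
    ring
  rw [integral_sub (hG1i.const_mul s) (hG2i.const_mul _), integral_const_mul,
    integral_const_mul, sub_eq_zero] at hzero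
  rw [div_mul_eq_mul_div, eq_div_iff hs, mul_comm (∫ x : ℝ, G1 x) s]
  linarith [hzero]
end
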